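/- Let k > 0 and ν ≥ μ > −k. Then the function x ↦ 𝓘^k_μ(x) / 𝓘^k_ν(x) is monotonically increasing on (0, ∞). -/

import Mathlib

open Real

/-- The k-gamma function, `Γ_k(x) = k^(x/k - 1) * Γ(x/k)`. -/
noncomputable def kGamma (k x : ℝ) : ℝ := k ^ (x / k - 1) * Real.Gamma (x / k)

/-- The normalized modified k-Bessel function `𝓘^k_ν(x) = Σ f_r(ν) x^(2r)`. -/
noncomputable def kBesselI (k ν x : ℝ) : ℝ :=
  ∑' r : ℕ, kGamma k (ν + k) / (kGamma k (r * k + ν + k) * 4 ^ r * (r.factorial : ℝ)) *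
    x ^ (2 * r)

/-- coefficient of the k-Bessel series -/
noncomputable def kc (k ν : ℝ) (r : ℕ) : ℝ :=
  kGamma k (ν + k) / (kGamma k (r * k + ν + k) * 4 ^ r * (r.factorial : ℝ))

lemma kBesselI_eq (k ν x : ℝ) : kBesselI k ν x = ∑' r : ℕ, kc k ν r * x ^ (2 * r) := rfl

lemma kGamma_pos {k x : ℝ} (hk : 0 < k) (hx : 0 < x) : 0 < kGamma k x :=
  mul_pos (rpow_pos_of_pos hk _) (Real.Gamma_pos_of_pos (div_pos hx hk))

lemma kGamma_add_self {k x : ℝ} (hk : 0 < k) (hx : 0 < x) :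
    kGamma k (x + k) = x * kGamma k x := by
  unfold kGamma
  have hk' : k ≠ 0 := hk.ne'
  have h1 : (x + k) / k = x / k + 1 := by field_simp
  rw [h1, Real.Gamma_add_one (by positivity), add_sub_cancel_right]
  have h2 : k ^ (x / k) = k ^ (x / k - 1) * k := by
    rw [Real.rpow_sub hk, Real.rpow_one]
    field_simp
  rw [h2]
  field_simp

lemma kc_pos {k ν : ℝ} (hk : 0 < k) (hν : -k < ν) (r : ℕ) : 0 < kc k ν r := by
  have h1 : 0 < ν + k := by linarith
  have h2 : 0 < (r : ℝ) * k + ν + k := by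
    have : (0:ℝ) ≤ (r : ℝ) * k := by positivity
    linarith
  have g1 := kGamma_pos hk h1
  have g2 := kGamma_pos hk h2
  have : (0:ℝ) < r.factorial := by exact_mod_cast r.factorial_pos
  unfold kc
  positivity

lemma kc_succ {k ν : ℝ} (hk : 0 < k) (hν : -k < ν) (n : ℕ) :
    kc k ν (n + 1) = kc k ν n / (((n : ℝ) * k + ν + k) * (4 * ((n : ℕ) + 1 : ℝ))) := by
  have hA : 0 < (n : ℝ) * k + ν + k := by
    have h0 : (0:ℝ) ≤ (n : ℝ) * k := by positivity
    linarith
  unfold kc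
  have hcast : ((n + 1 : ℕ) : ℝ) * k + ν + k = ((n : ℝ) * k + ν + k) + k := by
    push_cast; ring
  rw [hcast, kGamma_add_self hk hA, pow_succ, Nat.factorial_succ, div_div]
  congr 1
  push_cast
  ring

lemma kc_cross {k μ ν : ℝ} (hk : 0 < k) (hμ : -k < μ) (hμν : μ ≤ ν) {s r : ℕ}
    (h : s ≤ r) : kc k μ s * kc k ν r ≤ kc k μ r * kc k ν s := by
  have hν : -k < ν := lt_of_lt_of_le hμ hμν
  obtain ⟨d, rfl⟩ := Nat.exists_eq_add_of_le h
  clear h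
  induction d with
  | zero => simpa using le_of_eq (mul_comm _ _)
  | succ d ih =>
    have h0 : (0:ℝ) ≤ ((s + d : ℕ) : ℝ) * k := by positivity
    have hAμ : 0 < ((s + d : ℕ) : ℝ) * k + μ + k := by linarith
    have hAν : 0 < ((s + d : ℕ) : ℝ) * k + ν + k := by linarith
    have hB : (0:ℝ) < 4 * (((s + d : ℕ) : ℝ) + 1) := by positivity
    rw [show s + (d + 1) = (s + d) + 1 from rfl, kc_succ hk hμ, kc_succ hk hν,
      ← mul_div_assoc, div_mul_eq_mul_div]
    refine div_le_div₀ (mul_pos (kc_pos hk hμ (s+d)) (kc_pos hk hν s)).le ih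
      (mul_pos hAμ hB) ?_
    have h1 : ((s + d : ℕ) : ℝ) * k + μ + k ≤ ((s + d : ℕ) : ℝ) * k + ν + k := by
      linarith
    exact mul_le_mul_of_nonneg_right h1 hB.le

lemma kc_summable {k ν : ℝ} (hk : 0 < k) (hν : -k < ν) (x : ℝ) :
    Summable (fun r : ℕ => kc k ν r * x ^ (2 * r)) := by
  apply summable_of_ratio_norm_eventually_le (r := 1/2) (by norm_num)
  obtain ⟨N, hN⟩ := exists_nat_ge (x ^ 2 / k)
  filter_upwards [Filter.eventually_ge_atTop (N + 1)] with n hn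
  have hA : 0 < (n : ℝ) * k + ν + k := by
    have h0 : (0:ℝ) ≤ (n : ℝ) * k := by positivity
    linarith
  have hB : (0:ℝ) < 4 * ((n : ℝ) + 1) := by positivity
  have hpos := kc_pos hk hν n
  have hpos' := kc_pos hk hν (n + 1)
  have hxn : (0:ℝ) ≤ x ^ (2 * n) := (even_two_mul n).pow_nonneg x
  have hxn' : (0:ℝ) ≤ x ^ (2 * (n + 1)) := (even_two_mul (n+1)).pow_nonneg x
  rw [Real.norm_eq_abs, Real.norm_eq_abs, abs_of_nonneg (mul_nonneg hpos'.le hxn'),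
    abs_of_nonneg (mul_nonneg hpos.le hxn)]
  rw [kc_succ hk hν n]
  have hxsplit : x ^ (2 * (n + 1)) = x ^ (2 * n) * x ^ 2 := by
    rw [show 2 * (n + 1) = 2 * n + 2 from by ring, pow_add]
  have hNn : x ^ 2 ≤ (n : ℝ) * k := by
    have h1 : x ^ 2 ≤ (N : ℝ) * k := by
      rw [div_le_iff₀ hk] at hN; linarith
    have h2 : (N : ℝ) ≤ (n : ℝ) := by exact_mod_cast Nat.le_of_succ_le hn
    nlinarith
  have key : x ^ 2 / (((n : ℝ) * k + ν + k) * (4 * ((n : ℝ) + 1))) ≤ 1 / 2 := by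
    rw [div_le_iff₀ (by positivity)]
    have h3 : (n : ℝ) * k ≤ (n : ℝ) * k + ν + k := by linarith
    have h4 : (0:ℝ) ≤ (n : ℝ) := Nat.cast_nonneg n
    nlinarith
  calc kc k ν n / (((n : ℝ) * k + ν + k) * (4 * ((n : ℝ) + 1))) * x ^ (2 * (n + 1))
      = kc k ν n * x ^ (2 * n) *
        (x ^ 2 / (((n : ℝ) * k + ν + k) * (4 * ((n : ℝ) + 1)))) := by
        rw [hxsplit]; ring
    _ ≤ kc k ν n * x ^ (2 * n) * (1 / 2) :=
        mul_le_mul_of_nonneg_left key (mul_nonneg hpos.le hxn)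
    _ = 1 / 2 * (kc k ν n * x ^ (2 * n)) := by ring

lemma pow_cross {x y : ℝ} (hx : 0 ≤ x) (hxy : x ≤ y) {s r : ℕ} (h : s ≤ r) :
    x ^ (2 * r) * y ^ (2 * s) ≤ y ^ (2 * r) * x ^ (2 * s) := by
  obtain ⟨d, rfl⟩ := Nat.exists_eq_add_of_le h
  have hy : 0 ≤ y := hx.trans hxy
  have h1 : x ^ (2 * d) ≤ y ^ (2 * d) := pow_le_pow_left₀ hx hxy _
  have e : ∀ z : ℝ, z ^ (2 * (s + d)) = z ^ (2 * s) * z ^ (2 * d) := fun z => by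
    rw [show 2 * (s + d) = 2 * s + 2 * d from by ring, pow_add]
  rw [e x, e y]
  calc x ^ (2 * s) * x ^ (2 * d) * y ^ (2 * s)
      = x ^ (2 * s) * y ^ (2 * s) * x ^ (2 * d) := by ring
    _ ≤ x ^ (2 * s) * y ^ (2 * s) * y ^ (2 * d) :=
        mul_le_mul_of_nonneg_left h1 (by positivity)
    _ = y ^ (2 * s) * y ^ (2 * d) * x ^ (2 * s) := by ring

/-- symmetrization comparison of double sums -/
lemma tsum_prod_swap_le {a b c d : ℕ → ℝ}
    (hab : Summable (fun p : ℕ × ℕ => a p.1 * b p.2))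
    (hcd : Summable (fun p : ℕ × ℕ => c p.1 * d p.2))
    (h : ∀ r s : ℕ, a r * b s + a s * b r ≤ c r * d s + c s * d r) :
    (∑' p : ℕ × ℕ, a p.1 * b p.2) ≤ ∑' p : ℕ × ℕ, c p.1 * d p.2 := by
  set D : ℕ × ℕ → ℝ := fun p => c p.1 * d p.2 - a p.1 * b p.2 with hD
  have hDS : Summable D := hcd.sub hab
  have hDSswap : Summable (fun p : ℕ × ℕ => D p.swap) := by
    have := (Equiv.prodComm ℕ ℕ).summable_iff.mpr hDS
    exact this
  have hpt : ∀ p : ℕ × ℕ, 0 ≤ D p + D p.swap := by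
    rintro ⟨r, s⟩
    have := h r s
    simp only [hD, Prod.swap_prod_mk]
    linarith
  have h2 : ∑' p : ℕ × ℕ, (D p + D p.swap)
      = (∑' p : ℕ × ℕ, D p) + ∑' p : ℕ × ℕ, D p.swap := Summable.tsum_add hDS hDSswap
  have h3 : ∑' p : ℕ × ℕ, D p.swap = ∑' p : ℕ × ℕ, D p := by
    have := (Equiv.prodComm ℕ ℕ).tsum_eq D
    simpa [Equiv.coe_prodComm] using this
  have h4 : 0 ≤ ∑' p : ℕ × ℕ, (D p + D p.swap) := tsum_nonneg hpt
  have h5 : ∑' p : ℕ × ℕ, D p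
      = (∑' p : ℕ × ℕ, c p.1 * d p.2) - ∑' p : ℕ × ℕ, a p.1 * b p.2 := Summable.tsum_sub hcd hab
  rw [h2, h3, h5] at h4
  linarith

set_option maxHeartbeats 1600000 in
lemma kBesselI_prod_le {k μ ν : ℝ} (hk : 0 < k) (hμ : -k < μ) (hμν : μ ≤ ν)
    {x y : ℝ} (hx : 0 < x) (hxy : x ≤ y) :
    (∑' r : ℕ, kc k μ r * x ^ (2 * r)) * (∑' r : ℕ, kc k ν r * y ^ (2 * r)) ≤
      (∑' r : ℕ, kc k μ r * y ^ (2 * r)) * (∑' r : ℕ, kc k ν r * x ^ (2 * r)) := by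
  have hν : -k < ν := lt_of_lt_of_le hμ hμν
  set A : ℕ → ℝ := kc k μ with hA
  set B : ℕ → ℝ := kc k ν with hB
  have hSμx : Summable (fun r : ℕ => A r * x ^ (2 * r)) := kc_summable hk hμ x
  have hSμy : Summable (fun r : ℕ => A r * y ^ (2 * r)) := kc_summable hk hμ y
  have hSνx : Summable (fun r : ℕ => B r * x ^ (2 * r)) := kc_summable hk hν x
  have hSνy : Summable (fun r : ℕ => B r * y ^ (2 * r)) := kc_summable hk hν y
  have hApos : ∀ r, 0 < A r := kc_pos hk hμ
  have hBpos : ∀ r, 0 < B r := kc_pos hk hν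
  have norm_of : ∀ {f : ℕ → ℝ}, (∀ n, 0 ≤ f n) → Summable f →
      Summable (fun n => ‖f n‖) := by
    intro f hf hs
    refine hs.congr fun n => ?_
    rw [Real.norm_eq_abs, abs_of_nonneg (hf n)]
  have hterm_nonneg : ∀ (C : ℕ → ℝ) (z : ℝ), (∀ r, 0 < C r) →
      ∀ n, 0 ≤ C n * z ^ (2 * n) := fun C z hC n =>
    mul_nonneg (hC n).le ((even_two_mul n).pow_nonneg z)
  rw [tsum_mul_tsum_of_summable_norm
      (norm_of (hterm_nonneg A x hApos) hSμx) (norm_of (hterm_nonneg B y hBpos) hSνy),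
    tsum_mul_tsum_of_summable_norm
      (norm_of (hterm_nonneg A y hApos) hSμy) (norm_of (hterm_nonneg B x hBpos) hSνx)]
  have hvS : Summable (fun p : ℕ × ℕ =>
      (A p.1 * x ^ (2 * p.1)) * (B p.2 * y ^ (2 * p.2))) := summable_mul_of_summable_norm
    (norm_of (hterm_nonneg A x hApos) hSμx) (norm_of (hterm_nonneg B y hBpos) hSνy)
  have huS : Summable (fun p : ℕ × ℕ =>
      (A p.1 * y ^ (2 * p.1)) * (B p.2 * x ^ (2 * p.2))) := summable_mul_of_summable_norm
    (norm_of (hterm_nonneg A y hApos) hSμy) (norm_of (hterm_nonneg B x hBpos) hSνx)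
  refine tsum_prod_swap_le (a := fun n => A n * x ^ (2 * n)) (b := fun n => B n * y ^ (2 * n))
    (c := fun n => A n * y ^ (2 * n)) (d := fun n => B n * x ^ (2 * n)) hvS huS ?_
  intro r s
  have hid : ((A r * y ^ (2 * r)) * (B s * x ^ (2 * s))
        + (A s * y ^ (2 * s)) * (B r * x ^ (2 * r)))
      - ((A r * x ^ (2 * r)) * (B s * y ^ (2 * s))
        + (A s * x ^ (2 * s)) * (B r * y ^ (2 * r)))
      = (A r * B s - A s * B r)
        * (y ^ (2 * r) * x ^ (2 * s) - x ^ (2 * r) * y ^ (2 * s)) := by ring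
  have hnn : 0 ≤ (A r * B s - A s * B r)
      * (y ^ (2 * r) * x ^ (2 * s) - x ^ (2 * r) * y ^ (2 * s)) := by
    rcases le_total s r with h | h
    · refine mul_nonneg (sub_nonneg.2 (kc_cross hk hμ hμν h)) (sub_nonneg.2 ?_)
      have := pow_cross hx.le hxy h
      linarith
    · have h1 : A r * B s - A s * B r ≤ 0 := by
        have := kc_cross hk hμ hμν h; linarith
      have h2 : y ^ (2 * r) * x ^ (2 * s) - x ^ (2 * r) * y ^ (2 * s) ≤ 0 := by
        have := pow_cross hx.le hxy h; linarith
      nlinarith [h1, h2]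
  linarith

lemma kBesselI_pos {k ν : ℝ} (hk : 0 < k) (hν : -k < ν) (x : ℝ) :
    0 < kBesselI k ν x := by
  rw [kBesselI_eq]
  refine Summable.tsum_pos (kc_summable hk hν x)
    (fun i => mul_nonneg (kc_pos hk hν i).le ((even_two_mul i).pow_nonneg x)) 0 ?_
  simpa using kc_pos hk hν 0

theorem kBesselI_ratio_monotone (k μ ν : ℝ) (hk : 0 < k) (hμ : -k < μ) (hμν : μ ≤ ν) :
    MonotoneOn (fun x : ℝ => kBesselI k μ x / kBesselI k ν x) (Set.Ioi (0 : ℝ)) := by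
  have hν : -k < ν := lt_of_lt_of_le hμ hμν
  intro x hx y hy hxy
  simp only [Set.mem_Ioi] at hx hy
  simp only []
  rw [div_le_div_iff₀ (kBesselI_pos hk hν x) (kBesselI_pos hk hν y),
    kBesselI_eq, kBesselI_eq, kBesselI_eq, kBesselI_eq]
  exact kBesselI_prod_le hk hμ hμν hx hxy
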